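/- In a residuated lattice, for any subset X, the coannihilator X^⊥ = {a ∈ A | x ∨ a = 1 for all x ∈ X} equals the intersection of all prime filters not containing X, and also equals the intersection of all minimal prime filters not containing X. -/
import Mathlib


universe u

class ResiduatedLattice (A : Type u) extends Lattice A, BoundedOrder A where
  mul : A → A → A
  himp : A → A → A
  mul_comm : ∀ x y : A, mul x y = mul y x
  mul_assoc : ∀ x y z : A, mul (mul x y) z = mul x (mul y z)
  mul_top : ∀ x : A, mul x ⊤ = x
  adjoint : ∀ x y z : A, mul x y ≤ z ↔ x ≤ himp y z

namespace RL

variable {A : Type u} [ResiduatedLattice A]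

/-- A filter: a nonempty subset closed under the monoid operation `⊙` and closed
under joins with arbitrary elements. -/
def IsFilter (F : Set A) : Prop :=
  F.Nonempty ∧ (∀ x ∈ F, ∀ y ∈ F, ResiduatedLattice.mul x y ∈ F) ∧
    (∀ x ∈ F, ∀ y : A, x ⊔ y ∈ F)

/-- A prime filter: a proper filter such that `x ⊔ y ∈ P` implies `x ∈ P` or `y ∈ P`. -/
def IsPrime (P : Set A) : Prop :=
  IsFilter P ∧ P ≠ Set.univ ∧ ∀ x y : A, x ⊔ y ∈ P → x ∈ P ∨ y ∈ P

/-- The filter generated by a subset `X`. -/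
def Fgen (X : Set A) : Set A := ⋂₀ {G : Set A | IsFilter G ∧ X ⊆ G}

/-- An `X`-minimal prime filter: a minimal element of the set of prime filters containing `X`. -/
def MinPrimeOver (X : Set A) (P : Set A) : Prop :=
  IsPrime P ∧ X ⊆ P ∧ ∀ Q : Set A, IsPrime Q → X ⊆ Q → Q ⊆ P → Q = P

/-- A minimal prime filter. -/
def MinPrime (P : Set A) : Prop :=
  IsPrime P ∧ ∀ Q : Set A, IsPrime Q → Q ⊆ P → Q = P

/-- The coannihilator of `X` belonging to `F`. -/
def coann (F : Set A) (X : Set A) : Set A := {a : A | ∀ x ∈ X, x ⊔ a ∈ F}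

/-- `X^⊥ = {a | x ⊔ a = ⊤ for all x ∈ X}`. -/
def perp (X : Set A) : Set A := {a : A | ∀ x ∈ X, x ⊔ a = ⊤}

/-- `D_F(P) = {a | (F : a) ⊄ P}`. -/
def DF (F P : Set A) : Set A := {a : A | ¬ coann F {a} ⊆ P}

/-- A `∨`-closed subset: nonempty and closed under joins. -/
def VClosed (C : Set A) : Prop := C.Nonempty ∧ ∀ x ∈ C, ∀ y ∈ C, x ⊔ y ∈ C

end RL

namespace RLAux



variable {A : Type u} [ResiduatedLattice A]

local infixl:70 " ⊙ " => ResiduatedLattice.mul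

lemma mul_mono_left {x x' : A} (y : A) (h : x ≤ x') : x ⊙ y ≤ x' ⊙ y :=
  (ResiduatedLattice.adjoint x y _).2 (h.trans ((ResiduatedLattice.adjoint x' y _).1 le_rfl))

lemma mul_mono_right (x : A) {y y' : A} (h : y ≤ y') : x ⊙ y ≤ x ⊙ y' := by
  rw [ResiduatedLattice.mul_comm x y, ResiduatedLattice.mul_comm x y']; exact mul_mono_left x h

lemma mul_le_left (x y : A) : x ⊙ y ≤ x := by
  have := mul_mono_right x (le_top (a := y))
  rwa [ResiduatedLattice.mul_top] at this

lemma mul_le_right (x y : A) : x ⊙ y ≤ y := by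
  rw [ResiduatedLattice.mul_comm]; exact mul_le_left y x

lemma mul_sup (x y z : A) : x ⊙ (y ⊔ z) = (x ⊙ y) ⊔ (x ⊙ z) := by
  apply le_antisymm
  · rw [ResiduatedLattice.mul_comm]
    refine (ResiduatedLattice.adjoint _ _ _).2 (sup_le ?_ ?_)
    · exact (ResiduatedLattice.adjoint y x _).1 (by rw [ResiduatedLattice.mul_comm]; exact le_sup_left)
    · exact (ResiduatedLattice.adjoint z x _).1 (by rw [ResiduatedLattice.mul_comm]; exact le_sup_right)
  · exact sup_le (mul_mono_right x le_sup_left) (mul_mono_right x le_sup_right)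

def pw (u : A) : ℕ → A
  | 0 => ⊤
  | n + 1 => u ⊙ pw u n

lemma pw_add (u : A) (n m : ℕ) : pw u (n + m) = pw u n ⊙ pw u m := by
  induction n with
  | zero =>
    rw [Nat.zero_add]
    show pw u m = ⊤ ⊙ pw u m
    rw [ResiduatedLattice.mul_comm, ResiduatedLattice.mul_top]
  | succ n ih =>
    rw [show n + 1 + m = (n + m) + 1 from by omega]
    show u ⊙ pw u (n + m) = (u ⊙ pw u n) ⊙ pw u m
    rw [ih, ResiduatedLattice.mul_assoc]

lemma pw_sup_le (u v : A) : ∀ n m : ℕ, pw (u ⊔ v) (n + m) ≤ pw u n ⊔ pw v m := by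
  intro n
  induction n with
  | zero =>
    intro m
    have : pw u 0 = (⊤ : A) := rfl
    rw [this, top_sup_eq]
    exact le_top
  | succ n ihn =>
    intro m
    induction m with
    | zero =>
      have : pw v 0 = (⊤ : A) := rfl
      rw [this, sup_top_eq]
      exact le_top
    | succ m ihm =>
      have hidx : n + 1 + (m + 1) = (n + (m + 1)) + 1 := by omega
      rw [hidx]
      show (u ⊔ v) ⊙ pw (u ⊔ v) (n + (m + 1)) ≤ pw u (n + 1) ⊔ pw v (m + 1)
      rw [ResiduatedLattice.mul_comm, mul_sup]
      have h1 : pw (u ⊔ v) (n + (m + 1)) ≤ pw u n ⊔ pw v (m + 1) := ihn (m + 1)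
      have h2 : pw (u ⊔ v) (n + (m + 1)) ≤ pw u (n + 1) ⊔ pw v m := by
        have := ihm
        rwa [show n + 1 + m = n + (m + 1) by omega] at this
      apply sup_le
      · calc pw (u ⊔ v) (n + (m + 1)) ⊙ u ≤ (pw u n ⊔ pw v (m + 1)) ⊙ u :=
              mul_mono_left u h1
          _ = u ⊙ (pw u n ⊔ pw v (m + 1)) := ResiduatedLattice.mul_comm _ _
          _ = u ⊙ pw u n ⊔ u ⊙ pw v (m + 1) := mul_sup _ _ _
          _ ≤ pw u (n + 1) ⊔ pw v (m + 1) :=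
              sup_le le_sup_left ((mul_le_right _ _).trans le_sup_right)
      · calc pw (u ⊔ v) (n + (m + 1)) ⊙ v ≤ (pw u (n + 1) ⊔ pw v m) ⊙ v :=
              mul_mono_left v h2
          _ = v ⊙ (pw u (n + 1) ⊔ pw v m) := ResiduatedLattice.mul_comm _ _
          _ = v ⊙ pw u (n + 1) ⊔ v ⊙ pw v m := mul_sup _ _ _
          _ ≤ pw u (n + 1) ⊔ pw v (m + 1) :=
              sup_le ((mul_le_right _ _).trans le_sup_left) le_sup_right

lemma top_mem {F : Set A} (hF : RL.IsFilter F) : (⊤ : A) ∈ F := by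
  obtain ⟨⟨t, ht⟩, _, hj⟩ := hF
  have := hj t ht ⊤
  rwa [sup_top_eq] at this

lemma up_mem {F : Set A} (hF : RL.IsFilter F) {x y : A} (hx : x ∈ F) (h : x ≤ y) : y ∈ F := by
  have := hF.2.2 x hx y
  rwa [sup_eq_right.mpr h] at this

lemma pw_mem {F : Set A} (hF : RL.IsFilter F) {u : A} (hu : u ∈ F) (n : ℕ) : pw u n ∈ F := by
  induction n with
  | zero => exact top_mem hF
  | succ n ih => exact hF.2.1 u hu _ ih

/-- The filter generated by `F ∪ {u}`. -/
def ext (F : Set A) (u : A) : Set A := {z | ∃ p ∈ F, ∃ n : ℕ, p ⊙ pw u n ≤ z}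

lemma subset_ext {F : Set A} (u : A) : F ⊆ ext F u := by
  intro p hp
  refine ⟨p, hp, 0, ?_⟩
  show p ⊙ ⊤ ≤ p
  rw [ResiduatedLattice.mul_top]

lemma mem_ext {F : Set A} (hF : RL.IsFilter F) (u : A) : u ∈ ext F u := by
  refine ⟨⊤, top_mem hF, 1, ?_⟩
  show ⊤ ⊙ (u ⊙ ⊤) ≤ u
  rw [ResiduatedLattice.mul_top, ResiduatedLattice.mul_comm, ResiduatedLattice.mul_top]


lemma ext_filter {F : Set A} (hF : RL.IsFilter F) (u : A) : RL.IsFilter (ext F u) := by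
  refine ⟨⟨u, mem_ext hF u⟩, ?_, ?_⟩
  · rintro z ⟨p, hp, n, hn⟩ w ⟨q, hq, m, hm⟩
    refine ⟨p ⊙ q, hF.2.1 p hp q hq, n + m, ?_⟩
    have hpow : pw u (n + m) = pw u n ⊙ pw u m := pw_add u n m
    calc (p ⊙ q) ⊙ pw u (n + m) = (p ⊙ q) ⊙ (pw u n ⊙ pw u m) := by rw [hpow]
      _ = ((p ⊙ q) ⊙ pw u n) ⊙ pw u m := (ResiduatedLattice.mul_assoc _ _ _).symm
      _ = ((q ⊙ p) ⊙ pw u n) ⊙ pw u m := by rw [ResiduatedLattice.mul_comm p q]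
      _ = (q ⊙ (p ⊙ pw u n)) ⊙ pw u m := by rw [ResiduatedLattice.mul_assoc q p]
      _ = ((p ⊙ pw u n) ⊙ q) ⊙ pw u m := by rw [ResiduatedLattice.mul_comm q]
      _ = (p ⊙ pw u n) ⊙ (q ⊙ pw u m) := ResiduatedLattice.mul_assoc _ _ _
      _ ≤ z ⊙ w := le_trans (mul_mono_left _ hn) (mul_mono_right _ hm)
  · rintro z ⟨p, hp, n, hn⟩ y
    exact ⟨p, hp, n, hn.trans le_sup_left⟩

/-- Separation: if `x ⊔ a ≠ ⊤` then there is a prime filter omitting both. -/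
lemma exists_prime (x a : A) (h : x ⊔ a ≠ ⊤) :
    ∃ P : Set A, RL.IsPrime P ∧ x ∉ P ∧ a ∉ P := by
  classical
  set C : Set A := {x, a, x ⊔ a} with hC
  have hxt : x ≠ ⊤ := fun hx => h (by rw [hx, top_sup_eq])
  have hat : a ≠ ⊤ := fun ha => h (by rw [ha, sup_top_eq])
  have hCne : ∀ c ∈ C, c ≠ ⊤ := by
    intro c hc
    simp only [hC, Set.mem_insert_iff, Set.mem_singleton_iff] at hc
    rcases hc with h1 | h1 | h1 <;> rw [h1]
    exacts [hxt, hat, h]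
  have hCsup : ∀ c ∈ C, ∀ d ∈ C, c ⊔ d ∈ C := by
    intro c hc d hd
    simp only [hC, Set.mem_insert_iff, Set.mem_singleton_iff] at hc hd ⊢
    rcases hc with h1 | h1 | h1 <;> rcases hd with h2 | h2 | h2 <;> rw [h1, h2]
    · left; rw [sup_idem]
    · right; right; rfl
    · right; right; rw [← sup_assoc, sup_idem]
    · right; right; rw [sup_comm]
    · right; left; rw [sup_idem]
    · right; right; rw [sup_comm a (x ⊔ a), sup_assoc, sup_idem]
    · right; right; rw [sup_assoc, sup_comm a x, ← sup_assoc, sup_idem]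
    · right; right; rw [sup_assoc, sup_idem]
    · right; right; rw [sup_idem]
  set S : Set (Set A) := {F | RL.IsFilter F ∧ ∀ c ∈ C, c ∉ F} with hS
  have h0 : ({⊤} : Set A) ∈ S := by
    refine ⟨⟨⟨⊤, rfl⟩, ?_, ?_⟩, ?_⟩
    · rintro z rfl w rfl
      show ⊤ ⊙ ⊤ = ⊤
      rw [ResiduatedLattice.mul_top]
    · rintro z rfl y
      show ⊤ ⊔ y = ⊤
      rw [top_sup_eq]
    · intro c hc hcF
      exact hCne c hc hcF
  obtain ⟨P, -, hPmax⟩ := zorn_subset_nonempty S (fun c hcS hchain hcne => by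
    obtain ⟨F0, hF0⟩ := hcne
    refine ⟨⋃₀ c, ⟨⟨?_, ?_, ?_⟩, ?_⟩, fun s hs => Set.subset_sUnion_of_mem hs⟩
    · obtain ⟨t, ht⟩ := (hcS hF0).1.1
      exact ⟨t, F0, hF0, ht⟩
    · rintro z ⟨F1, hF1, hz⟩ w ⟨F2, hF2, hw⟩
      rcases hchain.total hF1 hF2 with h12 | h21
      · exact ⟨F2, hF2, (hcS hF2).1.2.1 z (h12 hz) w hw⟩
      · exact ⟨F1, hF1, (hcS hF1).1.2.1 z hz w (h21 hw)⟩
    · rintro z ⟨F1, hF1, hz⟩ y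
      exact ⟨F1, hF1, (hcS hF1).1.2.2 z hz y⟩
    · rintro cc hcc ⟨F1, hF1, hcF1⟩
      exact (hcS hF1).2 cc hcc hcF1) _ h0
  have hPF : RL.IsFilter P := hPmax.prop.1
  have hPC : ∀ c ∈ C, c ∉ P := hPmax.prop.2
  have hxC : x ∈ C := Set.mem_insert _ _
  have haC : a ∈ C := Set.mem_insert_of_mem _ (Set.mem_insert _ _)
  refine ⟨P, ⟨hPF, ?_, ?_⟩, hPC x hxC, hPC a haC⟩
  · intro hPuniv
    exact hPC x hxC (hPuniv ▸ Set.mem_univ x)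
  · intro u v huv
    by_contra hcon
    push_neg at hcon
    obtain ⟨hu, hv⟩ := hcon
    -- `ext P u` properly extends `P`, hence meets `C`; same for `v`.
    have hmeet : ∀ w : A, w ∉ P → ∃ c ∈ C, ∃ p ∈ P, ∃ n : ℕ, p ⊙ pw w n ≤ c := by
      intro w hw
      by_contra hno
      push_neg at hno
      have : ext P w ∈ S := by
        refine ⟨ext_filter hPF w, ?_⟩
        rintro c hc ⟨p, hp, n, hn⟩
        exact absurd hn (hno c hc p hp n)
      exact hw (hPmax.2 this (subset_ext w) (mem_ext hPF w))
    obtain ⟨c₁, hc₁, p₁, hp₁, n, hn⟩ := hmeet u hu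
    obtain ⟨c₂, hc₂, p₂, hp₂, m, hm⟩ := hmeet v hv
    have key : (p₁ ⊙ p₂) ⊙ pw (u ⊔ v) (n + m) ≤ c₁ ⊔ c₂ := by
      calc (p₁ ⊙ p₂) ⊙ pw (u ⊔ v) (n + m)
          ≤ (p₁ ⊙ p₂) ⊙ (pw u n ⊔ pw v m) := mul_mono_right _ (pw_sup_le u v n m)
        _ = (p₁ ⊙ p₂) ⊙ pw u n ⊔ (p₁ ⊙ p₂) ⊙ pw v m := mul_sup _ _ _
        _ ≤ c₁ ⊔ c₂ := by
            apply sup_le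
            · exact le_trans (mul_mono_left _ (mul_le_left p₁ p₂)) (hn.trans le_sup_left)
            · exact le_trans (mul_mono_left _ (mul_le_right p₁ p₂)) (hm.trans le_sup_right)
    have hmemP : (p₁ ⊙ p₂) ⊙ pw (u ⊔ v) (n + m) ∈ P :=
      hPF.2.1 _ (hPF.2.1 p₁ hp₁ p₂ hp₂) _ (pw_mem hPF huv (n + m))
    exact hPC (c₁ ⊔ c₂) (hCsup c₁ hc₁ c₂ hc₂) (up_mem hPF hmemP key)

/-- Every prime filter contains a minimal prime filter. -/
lemma exists_minPrime_le {P : Set A} (hP : RL.IsPrime P) :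
    ∃ m : Set A, RL.MinPrime m ∧ m ⊆ P := by
  set T : Set (Set A) := {Q | RL.IsPrime Q ∧ Q ⊆ P} with hT
  obtain ⟨m, hmP, hmmin⟩ := zorn_superset_nonempty T (fun c hcT hchain hcne => by
    obtain ⟨Q0, hQ0⟩ := hcne
    refine ⟨⋂₀ c, ⟨⟨⟨⟨⊤, fun Q hQ => top_mem (hcT hQ).1.1⟩, ?_, ?_⟩, ?_, ?_⟩, ?_⟩,
      fun s hs => Set.sInter_subset_of_mem hs⟩
    · intro z hz w hw Q hQ
      exact (hcT hQ).1.1.2.1 z (hz Q hQ) w (hw Q hQ)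
    · intro z hz y Q hQ
      exact (hcT hQ).1.1.2.2 z (hz Q hQ) y
    · intro huniv
      have hsub : (⋂₀ c : Set A) ⊆ Q0 := Set.sInter_subset_of_mem hQ0
      apply (hcT hQ0).1.2.1
      exact Set.eq_univ_of_univ_subset (huniv ▸ hsub)
    · intro u v huv
      by_contra hcon
      push_neg at hcon
      obtain ⟨hu, hv⟩ := hcon
      simp only [Set.mem_sInter] at hu hv
      push_neg at hu hv
      obtain ⟨Q1, hQ1, hu1⟩ := hu
      obtain ⟨Q2, hQ2, hv2⟩ := hv
      rcases hchain.total hQ1 hQ2 with h12 | h21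
      · rcases (hcT hQ1).1.2.2 u v (huv Q1 hQ1) with h | h
        · exact hu1 h
        · exact hv2 (h12 h)
      · rcases (hcT hQ2).1.2.2 u v (huv Q2 hQ2) with h | h
        · exact hu1 (h21 h)
        · exact hv2 h
    · exact (Set.sInter_subset_of_mem hQ0).trans (hcT hQ0).2) _ ⟨hP, Set.Subset.rfl⟩
  refine ⟨m, ⟨hmmin.prop.1, ?_⟩, hmmin.prop.2⟩
  intro Q hQ hQm
  exact Set.Subset.antisymm hQm (hmmin.2 ⟨hQ, hQm.trans hmmin.prop.2⟩ hQm)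

lemma sep (X : Set A) {a : A} (h : a ∉ RL.perp X) :
    ∃ m : Set A, RL.MinPrime m ∧ ¬ X ⊆ m ∧ a ∉ m := by
  simp only [RL.perp, Set.mem_setOf_eq] at h
  push_neg at h
  obtain ⟨x, hxX, hxa⟩ := h
  obtain ⟨P, hP, hxP, haP⟩ := exists_prime x a hxa
  obtain ⟨m, hm, hmP⟩ := exists_minPrime_le hP
  exact ⟨m, hm, fun hXm => hxP (hmP (hXm hxX)), fun ha => haP (hmP ha)⟩

lemma perp_subset_prime {X P : Set A} (hP : RL.IsPrime P) (hXP : ¬ X ⊆ P) :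
    RL.perp X ⊆ P := by
  intro a ha
  obtain ⟨x, hxX, hxP⟩ := Set.not_subset.1 hXP
  have hsup : x ⊔ a ∈ P := by
    rw [ha x hxX]; exact top_mem hP.1
  rcases hP.2.2 x a hsup with h | h
  · exact absurd h hxP
  · exact h

end RLAux


theorem perp_eq_sInter {A : Type u} [ResiduatedLattice A] (X : Set A) :
    RL.perp X = ⋂₀ {P : Set A | RL.IsPrime P ∧ ¬ X ⊆ P} ∧
    RL.perp X = ⋂₀ {m : Set A | RL.MinPrime m ∧ ¬ X ⊆ m} := by
  constructor
  · apply Set.Subset.antisymm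
    · intro a ha
      rintro P ⟨hP, hXP⟩
      exact RLAux.perp_subset_prime hP hXP ha
    · intro a ha
      by_contra hcon
      obtain ⟨m, hm, hXm, ham⟩ := RLAux.sep X hcon
      exact ham (ha m ⟨hm.1, hXm⟩)
  · apply Set.Subset.antisymm
    · intro a ha
      rintro m ⟨hm, hXm⟩
      exact RLAux.perp_subset_prime hm.1 hXm ha
    · intro a ha
      by_contra hcon
      obtain ⟨m, hm, hXm, ham⟩ := RLAux.sep X hcon
      exact ham (ha m ⟨hm, hXm⟩)
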